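/- arXiv:2410.18650 — 2 statements merged into one kernel-verified Lean document; each statement's English description precedes it below -/
import Mathlib

section
/- For n ≥ 1, the n × n real matrix C' with entries C'_{ij} = 1/(i+j-1)! (for 1 ≤ i,j ≤ n) has nonzero determinant, and hence full rank. -/
open Polynomial

theorem stmt_5 (n : ℕ) (hn : 1 ≤ n) :
    let C' : Matrix (Fin n) (Fin n) ℝ :=
      fun i j => 1 / (Nat.factorial ((i : ℕ) + (j : ℕ) + 1) : ℝ)
    C'.det ≠ 0 ∧ C'.rank = n := by
  intro C'
  have hdet : C'.det ≠ 0 := by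
    intro hdet0
    obtain ⟨v, hv, hmv⟩ := (Matrix.exists_mulVec_eq_zero_iff).mpr hdet0
    -- define the polynomial f = ∑ j, (v j / (n+j)!) X^(n+j)
    set f : ℝ[X] := ∑ j : Fin n, C (v j / (Nat.factorial (n + (j : ℕ)))) * X ^ (n + (j : ℕ))
      with hf_def
    -- coefficients of f
    have hcoeff : ∀ j : Fin n, f.coeff (n + (j : ℕ)) = v j / (Nat.factorial (n + (j : ℕ))) := by
      intro j
      rw [hf_def, finset_sum_coeff]
      rw [Finset.sum_eq_single j]
      · simp
      · intro b _ hbj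
        rw [coeff_C_mul, coeff_X_pow, if_neg, mul_zero]
        intro h
        exact hbj (Fin.ext (by omega))
      · simp
    -- f = 0 implies v = 0, contradiction; so suffices f = 0
    have hf0 : f ≠ 0 := by
      intro h
      apply hv
      funext j
      have := hcoeff j
      rw [h, coeff_zero] at this
      have hfac : (Nat.factorial (n + (j : ℕ)) : ℝ) ≠ 0 := by
        exact_mod_cast Nat.factorial_ne_zero _
      have := this.symm
      field_simp at this
      simp [this]
    -- X^n divides f
    have hXdvd : X ^ n ∣ f := by
      rw [X_pow_dvd_iff]
      intro d hd
      rw [hf_def, finset_sum_coeff]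
      apply Finset.sum_eq_zero
      intro j _
      rw [coeff_C_mul, coeff_X_pow, if_neg (by omega), mul_zero]
    -- derivative conditions at 1
    have hderiv : ∀ m ≤ n - 1, (Polynomial.derivative^[m] f).IsRoot 1 := by
      intro m hm
      have hmn : m < n := by omega
      have hi : n - 1 - m < n := by omega
      have key := congrFun hmv ⟨n - 1 - m, hi⟩
      simp only [Matrix.mulVec, dotProduct, Pi.zero_apply] at key
      rw [IsRoot, hf_def, Polynomial.iterate_derivative_sum, eval_finset_sum]
      rw [← key]
      apply Finset.sum_congr rfl
      intro j _
      rw [Polynomial.iterate_derivative_C_mul,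
        Polynomial.iterate_derivative_X_pow_eq_C_mul]
      simp only [eval_mul, eval_C, eval_pow, eval_X, one_pow, mul_one]
      have hle : m ≤ n + (j : ℕ) := by omega
      have hfact : ((n + (j : ℕ)) - m).factorial * (n + (j : ℕ)).descFactorial m
          = (n + (j : ℕ)).factorial := Nat.factorial_mul_descFactorial hle
      have h1 : ((n + (j : ℕ)).factorial : ℝ) ≠ 0 := by
        exact_mod_cast Nat.factorial_ne_zero _
      have h2 : (((n + (j : ℕ)) - m).factorial : ℝ) ≠ 0 := by
        exact_mod_cast Nat.factorial_ne_zero _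
      have hidx : (↑(⟨n - 1 - m, hi⟩ : Fin n) : ℕ) + (j : ℕ) + 1 = (n + (j : ℕ)) - m := by
        simp only [Fin.val_mk]; omega
      simp only [C']
      rw [hidx]
      have hfactR : (((n + (j : ℕ)) - m).factorial : ℝ) * ((n + (j : ℕ)).descFactorial m : ℝ)
          = ((n + (j : ℕ)).factorial : ℝ) := by exact_mod_cast hfact
      field_simp
      rw [← hfactR]
      ring
    -- (X - 1)^n divides f
    have hmult : n - 1 < f.rootMultiplicity 1 :=
      Polynomial.lt_rootMultiplicity_of_isRoot_iterate_derivative hf0 hderiv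
    have hXsub : (X - C (1 : ℝ)) ^ n ∣ f := by
      rw [← Polynomial.le_rootMultiplicity_iff hf0]
      omega
    -- coprimality and degree contradiction
    have hcop : IsCoprime (X : ℝ[X]) (X - C 1) := ⟨1, -1, by rw [Polynomial.C_1]; ring⟩
    have hdvd : X ^ n * (X - C 1) ^ n ∣ f := (hcop.pow).mul_dvd hXdvd hXsub
    have hne : X ^ n * (X - C (1:ℝ)) ^ n ≠ 0 := by
      apply mul_ne_zero
      · exact pow_ne_zero _ X_ne_zero
      · exact pow_ne_zero _ (X_sub_C_ne_zero 1)
    have hdeg_big : 2 * n ≤ f.natDegree := by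
      have := Polynomial.natDegree_le_of_dvd hdvd hf0
      have hd : (X ^ n * (X - C (1:ℝ)) ^ n).natDegree = 2 * n := by
        rw [natDegree_mul (pow_ne_zero _ X_ne_zero) (pow_ne_zero _ (X_sub_C_ne_zero 1)),
          natDegree_pow, natDegree_pow, natDegree_X, natDegree_X_sub_C]
        ring
      omega
    have hdeg_small : f.natDegree ≤ 2 * n - 1 := by
      rw [hf_def]
      apply (Polynomial.natDegree_sum_le _ _).trans
      rw [Finset.fold_max_le]
      constructor
      · omega
      · intro j _
        apply (Polynomial.natDegree_C_mul_le _ _).trans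
        rw [natDegree_X_pow]
        have := j.isLt
        omega
    omega
  refine ⟨hdet, ?_⟩
  have : IsUnit C' := by
    rw [Matrix.isUnit_iff_isUnit_det]
    exact isUnit_iff_ne_zero.mpr hdet
  rw [Matrix.rank_of_isUnit C' this]
  simp
end

section
/- Fix n ≥ 1 and define c(ℓ, m) = 2^{ℓ-1} · m! · (m-1)! / (m-ℓ)! for 1 ≤ ℓ ≤ n and m ≥ n+1. Then the n × n matrix C with entries C_{ij} = c(i, j+n) has full rank. -/
theorem stmt_6 (n : ℕ) (hn : 1 ≤ n) :
    let C : Matrix (Fin n) (Fin n) ℝ := fun i j =>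
      2 ^ (i : ℕ) * (Nat.factorial (n + (j : ℕ) + 1) : ℝ) *
        (Nat.factorial (n + (j : ℕ)) : ℝ) / (Nat.factorial (n + (j : ℕ) - (i : ℕ)) : ℝ)
    C.rank = n := by
  intro C
  have hC : ∀ i j, C i j = (2 ^ (i : ℕ) : ℝ) * (Nat.factorial (n + (j : ℕ) + 1) : ℝ) *
      (Nat.descFactorial (n + (j : ℕ)) (i : ℕ) : ℝ) := by
    intro i j
    have hle : (i : ℕ) ≤ n + (j : ℕ) := le_trans (le_of_lt i.isLt) (Nat.le_add_right _ _)
    have h := Nat.factorial_mul_descFactorial hle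
    have hfac : (Nat.factorial (n + (j : ℕ)) : ℝ) =
        (Nat.factorial (n + (j : ℕ) - (i : ℕ)) : ℝ) *
          (Nat.descFactorial (n + (j : ℕ)) (i : ℕ) : ℝ) := by
      rw [← Nat.cast_mul, h]
    show 2 ^ (i : ℕ) * (Nat.factorial (n + (j : ℕ) + 1) : ℝ) *
        (Nat.factorial (n + (j : ℕ)) : ℝ) / (Nat.factorial (n + (j : ℕ) - (i : ℕ)) : ℝ) = _
    rw [hfac]
    have hne : (Nat.factorial (n + (j : ℕ) - (i : ℕ)) : ℝ) ≠ 0 := by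
      exact_mod_cast (Nat.factorial_pos _).ne'
    field_simp
  -- the pochhammer matrix (transposed)
  set A : Matrix (Fin n) (Fin n) ℝ :=
    Matrix.of fun (i j : Fin n) => (descPochhammer ℝ (j : ℕ)).eval ((n + (i : ℕ) : ℕ) : ℝ) with hA
  have hdetA : A.det ≠ 0 := by
    rw [hA, ← Matrix.det_eval_matrixOfPolynomials_eq_det_vandermonde
      (fun i : Fin n => ((n + (i : ℕ) : ℕ) : ℝ)) (fun i => descPochhammer ℝ (i : ℕ))
      (fun i => descPochhammer_natDegree ℝ (i : ℕ))
      (fun i => monic_descPochhammer ℝ (i : ℕ))]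
    rw [Matrix.det_vandermonde_ne_zero_iff]
    intro a b hab
    have hab' : ((n + (a : ℕ) : ℕ) : ℝ) = ((n + (b : ℕ) : ℕ) : ℝ) := hab
    have : n + (a : ℕ) = n + (b : ℕ) := by exact_mod_cast hab'
    omega
  have hCA : C = Matrix.of fun (i j : Fin n) =>
      ((2 ^ (i : ℕ) : ℝ)) * (((Nat.factorial (n + (j : ℕ) + 1) : ℝ)) * A.transpose i j) := by
    ext i j
    rw [hC i j]
    simp only [Matrix.of_apply, Matrix.transpose_apply, hA, Matrix.of_apply,
      descPochhammer_eval_eq_descFactorial]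
    ring
  have hdetC : C.det ≠ 0 := by
    rw [hCA]
    have h1 : (Matrix.of fun (i j : Fin n) =>
        ((2 ^ (i : ℕ) : ℝ)) * (((Nat.factorial (n + (j : ℕ) + 1) : ℝ)) * A.transpose i j)).det =
        (∏ i : Fin n, (2 ^ (i : ℕ) : ℝ)) *
          (Matrix.of fun (i j : Fin n) => ((Nat.factorial (n + (j : ℕ) + 1) : ℝ)) * A.transpose i j).det :=
      Matrix.det_mul_column _ _
    have h2 : (Matrix.of fun (i j : Fin n) => ((Nat.factorial (n + (j : ℕ) + 1) : ℝ)) * A.transpose i j).det =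
        (∏ j : Fin n, (Nat.factorial (n + (j : ℕ) + 1) : ℝ)) * A.transpose.det :=
      Matrix.det_mul_row _ _
    rw [h1, h2, Matrix.det_transpose]
    refine mul_ne_zero (Finset.prod_ne_zero_iff.2 fun i _ => by positivity)
      (mul_ne_zero (Finset.prod_ne_zero_iff.2 fun j _ => by
        exact_mod_cast (Nat.factorial_pos _).ne') hdetA)
  have : C.rank = Fintype.card (Fin n) :=
    Matrix.rank_of_isUnit C (Matrix.isUnit_iff_isUnit_det C |>.2 (isUnit_iff_ne_zero.2 hdetC))
  simpa using this
end
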